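/- Correspondence between pointwise and extremal-depth central regions (Proposition 5): Fix γ ∈ (0,1). Assume: every marginal CDF F_t is continuous on ℝ; the quantile functions q_{γ/2} and q_{1−γ/2} belong to C(I,ℝ); and for every h ∈ C(I,ℝ) the set {x ∈ C(I,ℝ) : d_x = d_h and x ≠ h} has P-outer measure zero, where d_f := inf{r ∈ [0,1] : Φ_f(r) > 0}. Define the pointwise central region Q_{1−γ} := {f ∈ C(I,ℝ) : q_{γ/2}(t) ≤ f(t) ≤ q_{1−γ/2}(t) for all t ∈ I}, let α := ED(q_{γ/2},P), and let C* := {f ∈ C(I,ℝ) : ED(f,P) ≥ α}. Then P*(Q_{1−γ} Δ C*) = 0, where Δ denotes symmetric difference; that is, the pointwise central region coincides with an extremal-depth central region up to a set of P-measure zero. -/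

import Mathlib

open MeasureTheory Set Filter
open scoped NNReal ENNReal symmDiff

noncomputable section

/-- The space `C(I, ℝ)` of continuous real-valued functions on `I = [0,1]`,
equipped with the sup metric. -/
abbrev FSp := C(unitInterval, ℝ)

/-- Borel σ-algebra on `C(I, ℝ)`. -/
instance : MeasurableSpace FSp := borel FSp
instance : BorelSpace FSp := ⟨rfl⟩

/-- Pointwise depth `D_g(t) = 1 - |P{x : x(t) > g(t)} - P{x : x(t) < g(t)}|`. -/
def pdepth (P : Measure FSp) (g : unitInterval → ℝ) (t : unitInterval) : ℝ :=
  1 - |(P {x : FSp | g t < x t}).toReal - (P {x : FSp | x t < g t}).toReal|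

/-- Depth CDF (d-CDF) `Φ_g(r) = Leb{t ∈ I : D_g(t) ≤ r}`. -/
def dcdf (P : Measure FSp) (g : unitInterval → ℝ) (r : ℝ) : ℝ :=
  (volume {t : unitInterval | pdepth P g t ≤ r}).toReal

/-- The set `R(g,h) = {r ∈ [0,1] : Φ_g(r) ≠ Φ_h(r)}`. -/
def Rset (P : Measure FSp) (g h : unitInterval → ℝ) : Set ℝ :=
  {r ∈ Icc (0:ℝ) 1 | dcdf P g r ≠ dcdf P h r}

/-- `g ≺ h`: `g` is more extreme than `h`, i.e. `R(g,h)` is nonempty and, with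
`r* = inf R(g,h)`, there is `δ > 0` with `Φ_g(r) > Φ_h(r)` for all
`r ∈ (r*, r*+δ) ∩ [0,1]`.  `g ⪰ h` is `¬ prec P g h`. -/
def prec (P : Measure FSp) (g h : unitInterval → ℝ) : Prop :=
  (Rset P g h).Nonempty ∧
  ∃ δ > 0, ∀ r ∈ Ioo (sInf (Rset P g h)) (sInf (Rset P g h) + δ) ∩ Icc (0:ℝ) 1,
    dcdf P h r < dcdf P g r

/-- Extremal depth `ED(g,P) = P*{x ∈ C(I,ℝ) : g ⪰ x}` (a measure applied to an
arbitrary set is the induced outer measure). -/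
def ed (P : Measure FSp) (g : unitInterval → ℝ) : ℝ :=
  (P {x : FSp | ¬ prec P g ⇑x}).toReal

/-- Minimal depth level `d_f = inf{r ∈ [0,1] : Φ_f(r) > 0}`. -/
def dmin (P : Measure FSp) (f : unitInterval → ℝ) : ℝ :=
  sInf {r ∈ Icc (0:ℝ) 1 | 0 < dcdf P f r}

/-- Marginal CDF `F_t(y) = P{x : x(t) ≤ y}`. -/
def margF (P : Measure FSp) (t : unitInterval) (y : ℝ) : ℝ :=
  (P {x : FSp | x t ≤ y}).toReal

/-- Pointwise quantile function `q_a(t) = inf{y : F_t(y) ≥ a}`. -/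
def quant (P : Measure FSp) (a : ℝ) (t : unitInterval) : ℝ :=
  sInf {y : ℝ | a ≤ margF P t y}

/-- Lower envelope `f_L(t) = inf{f(t) : f ∈ C(I,ℝ), ED(f,P) > α}`. -/
def envL (P : Measure FSp) (α : ℝ) (t : unitInterval) : ℝ :=
  sInf ((fun f : FSp => f t) '' {f : FSp | α < ed P ⇑f})

/-- Upper envelope `f_U(t) = sup{f(t) : f ∈ C(I,ℝ), ED(f,P) > α}`. -/
def envU (P : Measure FSp) (α : ℝ) (t : unitInterval) : ℝ :=
  sSup ((fun f : FSp => f t) '' {f : FSp | α < ed P ⇑f})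

/-- The `(1-α)` extremal-depth central region `C_{1-α}`. -/
def centralRegion (P : Measure FSp) (α : ℝ) : Set FSp :=
  {x : FSp | ∀ t, envL P α t ≤ x t ∧ x t ≤ envU P α t}

/-- Boundary `∂C_{1-α}` of the central region. -/
def centralBoundary (P : Measure FSp) (α : ℝ) : Set FSp :=
  {x ∈ centralRegion P α | ∃ t, x t = envL P α t ∨ x t = envU P α t}

open scoped Topology

section Aux

variable (P : Measure FSp) [IsProbabilityMeasure P]

lemma measSet_le (t : unitInterval) (c : ℝ) : MeasurableSet {x : FSp | x t ≤ c} :=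
  (isClosed_le (continuous_eval_const t) continuous_const).measurableSet

lemma prob_toReal_le_one (s : Set FSp) : (P s).toReal ≤ 1 := by
  have h := ENNReal.toReal_mono (measure_ne_top P univ) (measure_mono (subset_univ s))
  simpa using h

lemma margF_mono (t : unitInterval) : Monotone (margF P t) := fun a b hab =>
  ENNReal.toReal_mono (measure_ne_top _ _) (measure_mono fun x hx => le_trans hx hab)

lemma margF_nonneg (t : unitInterval) (y : ℝ) : 0 ≤ margF P t y := ENNReal.toReal_nonneg

lemma margF_le_one (t : unitInterval) (y : ℝ) : margF P t y ≤ 1 := prob_toReal_le_one P _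

lemma atom_zero (t : unitInterval) (hF : Continuous (margF P t)) (c : ℝ) :
    P {x : FSp | x t = c} = 0 := by
  set s : ℕ → Set FSp := fun n => {x : FSp | x t ≤ c - 1/(n+1)} with hs
  have hmono : Monotone s := by
    intro m n hmn x hx
    have h1 : (1:ℝ)/(n+1) ≤ 1/(m+1) := by
      apply one_div_le_one_div_of_le (by positivity)
      have : (m:ℝ) ≤ n := Nat.cast_le.mpr hmn
      linarith
    simp only [hs, mem_setOf_eq] at hx ⊢
    linarith
  have hU : (⋃ n, s n) = {x : FSp | x t < c} := by
    ext x
    simp only [mem_iUnion, hs, mem_setOf_eq]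
    constructor
    · rintro ⟨n, hn⟩
      have : (0:ℝ) < 1/(n+1) := by positivity
      linarith
    · intro hx
      obtain ⟨n, hn⟩ := exists_nat_one_div_lt (sub_pos.mpr hx)
      exact ⟨n, by push_cast at hn ⊢; linarith⟩
  have htend : Tendsto (fun n => P (s n)) atTop (𝓝 (P {x : FSp | x t < c})) := by
    have := tendsto_measure_iUnion_atTop (μ := P) hmono
    rwa [hU] at this
  have htendR : Tendsto (fun n => (P (s n)).toReal) atTop
      (𝓝 ((P {x : FSp | x t < c}).toReal)) :=
    (ENNReal.tendsto_toReal (measure_ne_top P _)).comp htend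
  have htendF : Tendsto (fun n : ℕ => margF P t (c - 1/(n+1))) atTop (𝓝 (margF P t c)) := by
    apply (hF.tendsto c).comp
    have h1 : Tendsto (fun n : ℕ => 1/((n:ℝ)+1)) atTop (𝓝 0) :=
      tendsto_one_div_add_atTop_nhds_zero_nat
    have := tendsto_const_nhds (x := c) (f := atTop (α := ℕ)) |>.sub h1
    simpa using this
  have heq : (P {x : FSp | x t < c}).toReal = margF P t c :=
    tendsto_nhds_unique htendR htendF
  have heq2 : P {x : FSp | x t < c} = P {x : FSp | x t ≤ c} :=
    (ENNReal.toReal_eq_toReal_iff' (measure_ne_top P _) (measure_ne_top P _)).mp heq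
  have hdiff : {x : FSp | x t = c} = {x : FSp | x t ≤ c} \ {x : FSp | x t < c} := by
    ext x; simp only [mem_setOf_eq, mem_diff, not_lt]
    constructor
    · intro h; exact ⟨le_of_eq h, ge_of_eq h⟩
    · intro ⟨h1, h2⟩; exact le_antisymm h1 h2
  have hmeas : MeasurableSet {x : FSp | x t < c} :=
    (isOpen_lt (continuous_eval_const t) continuous_const).measurableSet
  have hfin : P {x : FSp | x t < c} ≠ ∞ := measure_ne_top P _
  have hsub : {x : FSp | x t < c} ⊆ {x : FSp | x t ≤ c} := fun x hx => le_of_lt (a := x t) hx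
  have hd := measure_diff hsub hmeas.nullMeasurableSet hfin
  rw [hdiff, hd, heq2, tsub_self]

lemma pdepth_eq (t : unitInterval) (hF : Continuous (margF P t)) (g : unitInterval → ℝ) :
    pdepth P g t = 1 - |1 - 2 * margF P t (g t)| := by
  have h1 : {x : FSp | g t < x t} = {x : FSp | x t ≤ g t}ᶜ := by
    ext x; simp [not_le]
  have h2 : P {x : FSp | x t < g t} = P {x : FSp | x t ≤ g t} := by
    have hsplit : {x : FSp | x t ≤ g t} = {x : FSp | x t < g t} ∪ {x : FSp | x t = g t} := by
      ext x; simp only [mem_setOf_eq, mem_union]; exact le_iff_lt_or_eq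
    apply le_antisymm
    · exact measure_mono fun x hx => le_of_lt (a := x t) hx
    · rw [hsplit]
      refine le_trans (measure_union_le _ _) ?_
      rw [atom_zero P t hF, add_zero]
  have h3 : (P {x : FSp | g t < x t}).toReal = 1 - margF P t (g t) := by
    rw [h1, measure_compl (measSet_le t (g t)) (measure_ne_top P _), measure_univ]
    rw [ENNReal.toReal_sub_of_le prob_le_one ENNReal.one_ne_top, ENNReal.toReal_one]
    rfl
  rw [pdepth, h3, h2]
  have : (P {x : FSp | x t ≤ g t}).toReal = margF P t (g t) := rfl
  rw [this]
  ring_nf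

lemma pdepth_nonneg (g : unitInterval → ℝ) (t : unitInterval) : 0 ≤ pdepth P g t := by
  have h1 := prob_toReal_le_one P {x : FSp | g t < x t}
  have h2 := prob_toReal_le_one P {x : FSp | x t < g t}
  have h3 : (0:ℝ) ≤ (P {x : FSp | g t < x t}).toReal := ENNReal.toReal_nonneg
  have h4 : (0:ℝ) ≤ (P {x : FSp | x t < g t}).toReal := ENNReal.toReal_nonneg
  have : |(P {x : FSp | g t < x t}).toReal - (P {x : FSp | x t < g t}).toReal| ≤ 1 :=
    abs_le.mpr ⟨by linarith, by linarith⟩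
  simp only [pdepth]; linarith

lemma pdepth_le_one (g : unitInterval → ℝ) (t : unitInterval) : pdepth P g t ≤ 1 := by
  simp only [pdepth]
  have := abs_nonneg ((P {x : FSp | g t < x t}).toReal - (P {x : FSp | x t < g t}).toReal)
  linarith

end Aux

section Aux2

variable (P : Measure FSp) [IsProbabilityMeasure P]

lemma dcdf_nonneg (g : unitInterval → ℝ) (r : ℝ) : 0 ≤ dcdf P g r := ENNReal.toReal_nonneg

lemma dcdf_mono (g : unitInterval → ℝ) : Monotone (dcdf P g) := fun a b hab =>
  ENNReal.toReal_mono (measure_ne_top _ _) (measure_mono fun t ht => le_trans ht hab)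

lemma dcdf_one (g : unitInterval → ℝ) : dcdf P g 1 = 1 := by
  have h : {t : unitInterval | pdepth P g t ≤ 1} = univ :=
    eq_univ_of_forall fun t => pdepth_le_one P g t
  rw [dcdf, h, measure_univ, ENNReal.toReal_one]

lemma dcdf_of_neg (g : unitInterval → ℝ) {r : ℝ} (hr : r < 0) : dcdf P g r = 0 := by
  have h : {t : unitInterval | pdepth P g t ≤ r} = ∅ :=
    eq_empty_iff_forall_notMem.mpr fun t ht =>
      absurd (le_trans (pdepth_nonneg P g t) ht) (not_le.mpr hr)
  rw [dcdf, h, measure_empty, ENNReal.toReal_zero]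

lemma dmin_one_mem (g : unitInterval → ℝ) :
    (1:ℝ) ∈ {r ∈ Icc (0:ℝ) 1 | 0 < dcdf P g r} :=
  ⟨⟨zero_le_one, le_refl 1⟩, by rw [dcdf_one]; exact one_pos⟩

lemma dmin_bddBelow (g : unitInterval → ℝ) :
    BddBelow {r ∈ Icc (0:ℝ) 1 | 0 < dcdf P g r} := ⟨0, fun r hr => hr.1.1⟩

lemma dmin_mem_Icc (g : unitInterval → ℝ) : dmin P g ∈ Icc (0:ℝ) 1 :=
  ⟨le_csInf ⟨1, dmin_one_mem P g⟩ fun r hr => hr.1.1,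
   csInf_le (dmin_bddBelow P g) (dmin_one_mem P g)⟩

lemma dcdf_eq_zero_of_lt_dmin (g : unitInterval → ℝ) {r : ℝ} (hr : r < dmin P g) :
    dcdf P g r = 0 := by
  rcases lt_or_ge r 0 with h | h
  · exact dcdf_of_neg P g h
  · by_contra hne
    have hpos : 0 < dcdf P g r := lt_of_le_of_ne (dcdf_nonneg P g r) (Ne.symm hne)
    have hr1 : r ≤ 1 := le_trans hr.le (dmin_mem_Icc P g).2
    exact absurd (csInf_le (dmin_bddBelow P g) ⟨⟨h, hr1⟩, hpos⟩) (not_le.mpr hr)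

lemma dcdf_pos_of_dmin_lt (g : unitInterval → ℝ) {r : ℝ} (hr : dmin P g < r) :
    0 < dcdf P g r := by
  obtain ⟨s, hs, hsr⟩ := exists_lt_of_csInf_lt ⟨1, dmin_one_mem P g⟩ hr
  exact lt_of_lt_of_le hs.2 (dcdf_mono P g hsr.le)

lemma prec_of_dmin_lt {g h : unitInterval → ℝ} (hlt : dmin P g < dmin P h) : prec P g h := by
  have hg0 : (0:ℝ) ≤ dmin P g := (dmin_mem_Icc P g).1
  have hh1 : dmin P h ≤ 1 := (dmin_mem_Icc P h).2
  have hmem : ∀ r : ℝ, dmin P g < r → r < dmin P h → r ∈ Rset P g h := by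
    intro r h1 h2
    refine ⟨⟨le_trans hg0 h1.le, le_trans h2.le hh1⟩, ?_⟩
    rw [dcdf_eq_zero_of_lt_dmin P h h2]
    exact ne_of_gt (dcdf_pos_of_dmin_lt P g h1)
  have hne : (Rset P g h).Nonempty :=
    ⟨(dmin P g + dmin P h)/2, hmem _ (by linarith) (by linarith)⟩
  have hbdd : BddBelow (Rset P g h) := ⟨0, fun r hr => hr.1.1⟩
  have hinf_ge : dmin P g ≤ sInf (Rset P g h) := by
    apply le_csInf hne
    intro r hr
    by_contra hlt'
    push_neg at hlt'
    have e1 : dcdf P g r = 0 := dcdf_eq_zero_of_lt_dmin P g hlt'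
    have e2 : dcdf P h r = 0 := dcdf_eq_zero_of_lt_dmin P h (lt_trans hlt' hlt)
    exact hr.2 (e1.trans e2.symm)
  have hinf_le : sInf (Rset P g h) ≤ dmin P g := by
    by_contra hgt
    push_neg at hgt
    set r := (dmin P g + min (sInf (Rset P g h)) (dmin P h))/2 with hrdef
    have hr1 : dmin P g < r := by
      have := lt_min hgt hlt
      simp only [hrdef]
      have h2 : dmin P g < min (sInf (Rset P g h)) (dmin P h) := this
      linarith
    have hr2 : r < sInf (Rset P g h) := by
      have h1 : min (sInf (Rset P g h)) (dmin P h) ≤ sInf (Rset P g h) := min_le_left _ _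
      have h2 : dmin P g < sInf (Rset P g h) := hgt
      simp only [hrdef]; linarith
    have hr3 : r < dmin P h := by
      have h1 : min (sInf (Rset P g h)) (dmin P h) ≤ dmin P h := min_le_right _ _
      simp only [hrdef]; linarith
    exact absurd (csInf_le hbdd (hmem r hr1 hr3)) (not_le.mpr hr2)
  have hinf : sInf (Rset P g h) = dmin P g := le_antisymm hinf_le hinf_ge
  refine ⟨hne, dmin P h - dmin P g, by linarith, ?_⟩
  intro r hr
  rw [hinf] at hr
  obtain ⟨⟨h1, h2⟩, _⟩ := hr
  rw [dcdf_eq_zero_of_lt_dmin P h (by linarith : r < dmin P h)]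
  exact dcdf_pos_of_dmin_lt P g h1

lemma prec_asymm {g h : unitInterval → ℝ} (h1 : prec P g h) (h2 : prec P h g) : False := by
  have hR : Rset P h g = Rset P g h := by
    ext r
    simp only [Rset, mem_setOf_eq, mem_sep_iff]
    exact and_congr_right fun _ => ne_comm
  obtain ⟨hne, δ₁, hδ₁, H1⟩ := h1
  obtain ⟨hne', δ₂, hδ₂, H2⟩ := h2
  rw [hR] at H2
  set r0 := sInf (Rset P g h) with hr0def
  have hbdd : BddBelow (Rset P g h) := ⟨0, fun r hr => hr.1.1⟩
  have hr0_ge : 0 ≤ r0 := le_csInf hne fun r hr => hr.1.1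
  have hr0_lt : r0 < 1 := by
    obtain ⟨s, hs⟩ := hne
    have hs1 : s ≠ 1 := by
      intro hseq
      apply hs.2
      rw [hseq, dcdf_one, dcdf_one]
    exact lt_of_le_of_lt (csInf_le hbdd hs) (lt_of_le_of_ne hs.1.2 hs1)
  set u := min 1 (r0 + min δ₁ δ₂) with hudef
  have hu : r0 < u := lt_min hr0_lt (by have := lt_min hδ₁ hδ₂; linarith)
  set r := (r0 + u)/2 with hrdef
  have hru : r < u := by simp only [hrdef]; linarith
  have hr_gt : r0 < r := by simp only [hrdef]; linarith
  have hr_le1 : r ≤ 1 := le_trans hru.le (min_le_left _ _)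
  have hr_in : r ∈ Icc (0:ℝ) 1 := ⟨by linarith, hr_le1⟩
  have hrlt : r < r0 + min δ₁ δ₂ := lt_of_lt_of_le hru (min_le_right _ _)
  have hmem1 : r ∈ Ioo r0 (r0 + δ₁) ∩ Icc (0:ℝ) 1 :=
    ⟨⟨hr_gt, lt_of_lt_of_le hrlt (by have := min_le_left δ₁ δ₂; linarith)⟩, hr_in⟩
  have hmem2 : r ∈ Ioo r0 (r0 + δ₂) ∩ Icc (0:ℝ) 1 :=
    ⟨⟨hr_gt, lt_of_lt_of_le hrlt (by have := min_le_right δ₁ δ₂; linarith)⟩, hr_in⟩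
  exact absurd (H1 r hmem1) (not_lt.mpr (H2 r hmem2).le)

end Aux2
section Aux3

variable (P : Measure FSp) [IsProbabilityMeasure P]

lemma margF_integral (s : unitInterval) (c : ℝ) :
    margF P s c = ∫ x : FSp, ({x : FSp | x s ≤ c}).indicator (fun _ => (1:ℝ)) x ∂P := by
  rw [integral_indicator_const (1:ℝ) (measSet_le s c)]
  simp [margF]
  rfl

lemma margF_comp_cont (hFcont : ∀ t : unitInterval, Continuous (margF P t))
    {f : unitInterval → ℝ} (hf : Continuous f) :
    Continuous fun t => margF P t (f t) := by
  rw [continuous_iff_seqContinuous]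
  intro u t hu
  have key : ∀ n, margF P (u n) (f (u n)) =
      ∫ x : FSp, ({x : FSp | x (u n) ≤ f (u n)}).indicator (fun _ => (1:ℝ)) x ∂P :=
    fun n => margF_integral P (u n) (f (u n))
  have key2 := margF_integral P t (f t)
  show Tendsto (fun n => margF P (u n) (f (u n))) atTop (𝓝 (margF P t (f t)))
  simp only [key, key2]
  apply tendsto_integral_of_dominated_convergence (bound := fun _ => (1:ℝ))
  · intro n
    exact ((measurable_const.indicator (measSet_le (u n) (f (u n))))).aestronglyMeasurable
  · exact integrable_const 1
  · intro n
    filter_upwards with x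
    by_cases hx : x ∈ {x : FSp | x (u n) ≤ f (u n)}
    · rw [indicator_of_mem hx]; simp
    · rw [indicator_of_notMem hx]; simp
  · have hae : ∀ᵐ x ∂P, x t ≠ f t := by
      have h0 := atom_zero P t (hFcont t) (f t)
      rw [ae_iff]
      convert h0 using 2
      ext x; simp
    filter_upwards [hae] with x hx
    rcases lt_or_gt_of_ne hx with hlt | hgt
    · have h1 : Tendsto (fun n => x (u n)) atTop (𝓝 (x t)) := (x.continuous.tendsto t).comp hu
      have h2 : Tendsto (fun n => f (u n)) atTop (𝓝 (f t)) := (hf.tendsto t).comp hu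
      have h3 : ∀ᶠ n in atTop, x (u n) < f (u n) := h1.eventually_lt h2 hlt
      have hmem : x ∈ {x' : FSp | x' t ≤ f t} := le_of_lt hlt
      rw [indicator_of_mem hmem]
      apply Tendsto.congr' _ (tendsto_const_nhds (x := (1:ℝ)))
      filter_upwards [h3] with n hn
      exact (indicator_of_mem (show x ∈ {x' : FSp | x' (u n) ≤ f (u n)} from le_of_lt hn) (fun _ => (1:ℝ))).symm
    · have h1 : Tendsto (fun n => x (u n)) atTop (𝓝 (x t)) := (x.continuous.tendsto t).comp hu
      have h2 : Tendsto (fun n => f (u n)) atTop (𝓝 (f t)) := (hf.tendsto t).comp hu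
      have h3 : ∀ᶠ n in atTop, f (u n) < x (u n) := h2.eventually_lt h1 hgt
      have hmem : x ∉ {x' : FSp | x' t ≤ f t} := by simp only [mem_setOf_eq, not_le]; exact hgt
      rw [indicator_of_notMem hmem]
      apply Tendsto.congr' _ (tendsto_const_nhds (x := (0:ℝ)))
      filter_upwards [h3] with n hn
      exact (indicator_of_notMem (show x ∉ {x' : FSp | x' (u n) ≤ f (u n)} by
        simp only [mem_setOf_eq, not_le]; exact hn) (fun _ => (1:ℝ))).symm

lemma pdepth_cont_t (hFcont : ∀ t : unitInterval, Continuous (margF P t))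
    {f : unitInterval → ℝ} (hf : Continuous f) :
    Continuous fun t => pdepth P f t := by
  have heq : (fun t => pdepth P f t) = fun t => 1 - |1 - 2 * margF P t (f t)| :=
    funext fun t => pdepth_eq P t (hFcont t) f
  rw [heq]
  exact continuous_const.sub
    ((continuous_const.sub (continuous_const.mul (margF_comp_cont P hFcont hf))).abs)

lemma pdepth_cont_x (hFcont : ∀ t : unitInterval, Continuous (margF P t)) (t : unitInterval) :
    Continuous fun x : FSp => pdepth P ⇑x t := by
  have heq : (fun x : FSp => pdepth P ⇑x t) = fun x : FSp => 1 - |1 - 2 * margF P t (x t)| :=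
    funext fun x => pdepth_eq P t (hFcont t) ⇑x
  rw [heq]
  exact continuous_const.sub
    ((continuous_const.sub (continuous_const.mul ((hFcont t).comp (continuous_eval_const t)))).abs)

lemma volume_pos_of_mem_open {U : Set unitInterval} (hU : IsOpen U) {t₀ : unitInterval}
    (ht : t₀ ∈ U) : 0 < volume U := by
  obtain ⟨ε, hε, hball⟩ := Metric.isOpen_iff.mp hU t₀ ht
  set a : ℝ := max ((t₀:ℝ) - ε) 0 with ha
  set b : ℝ := min ((t₀:ℝ) + ε) 1 with hb
  have ht0 := t₀.2
  have hab : a < b := by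
    simp only [ha, hb]
    rcases ht0 with ⟨h0, h1⟩
    apply max_lt <;> apply lt_min <;> linarith
  have hsub : Ioo a b ⊆ Subtype.val '' U := by
    intro y hy
    have hy0 : 0 ≤ y := le_of_lt (lt_of_le_of_lt (le_max_right _ _) hy.1)
    have hy1 : y ≤ 1 := le_of_lt (lt_of_lt_of_le hy.2 (min_le_right _ _))
    have hdist : dist (⟨y, hy0, hy1⟩ : unitInterval) t₀ < ε := by
      rw [Subtype.dist_eq, Real.dist_eq, abs_lt]
      have h1 : (t₀:ℝ) - ε ≤ a := le_max_left _ _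
      have h2 : b ≤ (t₀:ℝ) + ε := min_le_left _ _
      constructor <;> [skip; skip] <;> (obtain ⟨hya, hyb⟩ := hy; linarith)
    exact ⟨⟨y, hy0, hy1⟩, hball hdist, rfl⟩
  have hmeasemb : MeasurableEmbedding (Subtype.val : unitInterval → ℝ) :=
    MeasurableEmbedding.subtype_coe measurableSet_Icc
  have hcomap : volume U = volume (Subtype.val '' U) := by
    rw [unitInterval.volume_def, hmeasemb.comap_apply]
  rw [hcomap]
  calc (0:ℝ≥0∞) < volume (Ioo a b) := by rw [Real.volume_Ioo]; simp [hab]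
    _ ≤ volume (Subtype.val '' U) := measure_mono hsub

lemma pdepth_bddBelow (g : unitInterval → ℝ) :
    BddBelow (range fun t => pdepth P g t) := by
  refine ⟨0, ?_⟩
  rintro y ⟨t, rfl⟩
  exact pdepth_nonneg P g t

lemma dmin_eq_iInf (hFcont : ∀ t : unitInterval, Continuous (margF P t))
    {f : unitInterval → ℝ} (hf : Continuous f) :
    dmin P f = ⨅ t, pdepth P f t := by
  set m := ⨅ t, pdepth P f t with hm
  have hle : ∀ t, m ≤ pdepth P f t := fun t => ciInf_le (pdepth_bddBelow P f) t
  have hm0 : 0 ≤ m := le_ciInf fun t => pdepth_nonneg P f t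
  have hm1 : m ≤ 1 := le_trans (hle 0) (pdepth_le_one P f 0)
  have claim1 : ∀ r : ℝ, r < m → dcdf P f r = 0 := by
    intro r hr
    have h : {t : unitInterval | pdepth P f t ≤ r} = ∅ :=
      eq_empty_iff_forall_notMem.mpr fun t ht =>
        absurd (lt_of_le_of_lt ht hr) (not_lt.mpr (hle t))
    rw [dcdf, h, measure_empty, ENNReal.toReal_zero]
  have claim2 : ∀ r : ℝ, m < r → 0 < dcdf P f r := by
    intro r hr
    obtain ⟨t₀, ht₀⟩ := exists_lt_of_ciInf_lt hr
    have hopen : IsOpen {t : unitInterval | pdepth P f t < r} :=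
      isOpen_lt (pdepth_cont_t P hFcont hf) continuous_const
    have hpos := volume_pos_of_mem_open hopen ht₀
    have h1 : (0:ℝ) < (volume {t : unitInterval | pdepth P f t < r}).toReal :=
      ENNReal.toReal_pos (ne_of_gt hpos) (measure_ne_top _ _)
    refine lt_of_lt_of_le h1 ?_
    exact ENNReal.toReal_mono (measure_ne_top _ _)
      (measure_mono fun t ht => le_of_lt (show pdepth P f t < r from ht))
  apply le_antisymm
  · by_contra hgt
    push_neg at hgt
    set r := (m + dmin P f)/2 with hrdef
    have hdm1 : dmin P f ≤ 1 := (dmin_mem_Icc P f).2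
    have hr1 : m < r := by simp only [hrdef]; linarith
    have hr2 : r < dmin P f := by simp only [hrdef]; linarith
    have hrmem : r ∈ {r' ∈ Icc (0:ℝ) 1 | 0 < dcdf P f r'} :=
      ⟨⟨by linarith, by linarith⟩, claim2 r hr1⟩
    exact absurd (csInf_le (dmin_bddBelow P f) hrmem) (not_le.mpr hr2)
  · apply le_csInf ⟨1, dmin_one_mem P f⟩
    rintro r ⟨_, hpos⟩
    by_contra hlt
    push_neg at hlt
    rw [claim1 r hlt] at hpos
    exact lt_irrefl 0 hpos

lemma dmin_measurable (hFcont : ∀ t : unitInterval, Continuous (margF P t)) :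
    Measurable fun x : FSp => dmin P ⇑x := by
  obtain ⟨u, hu⟩ := TopologicalSpace.exists_dense_seq unitInterval
  have heq : ∀ x : FSp, dmin P ⇑x = ⨅ n, pdepth P ⇑x (u n) := by
    intro x
    rw [dmin_eq_iInf P hFcont x.continuous]
    have hbdd : BddBelow (range fun n => pdepth P ⇑x (u n)) := by
      refine ⟨0, ?_⟩
      rintro y ⟨n, rfl⟩
      exact pdepth_nonneg P ⇑x (u n)
    apply le_antisymm
    · exact le_ciInf fun n => ciInf_le (pdepth_bddBelow P ⇑x) (u n)
    · apply le_ciInf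
      intro t
      have hc : Continuous fun s => pdepth P ⇑x s := pdepth_cont_t P hFcont x.continuous
      have hclos : pdepth P ⇑x t ∈ closure ((fun s => pdepth P ⇑x s) '' range u) :=
        mem_closure_image hc.continuousAt (hu t)
      have himg : (fun s => pdepth P ⇑x s) '' range u = range fun n => pdepth P ⇑x (u n) := by
        rw [← range_comp]; rfl
      rw [himg] at hclos
      have hclosed : IsClosed {y : ℝ | ⨅ n, pdepth P ⇑x (u n) ≤ y} :=
        isClosed_le continuous_const continuous_id
      have hsub : (range fun n => pdepth P ⇑x (u n)) ⊆
          {y : ℝ | ⨅ n, pdepth P ⇑x (u n) ≤ y} := by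
        rintro y ⟨n, rfl⟩
        exact ciInf_le hbdd n
      exact hclosed.closure_subset_iff.mpr hsub hclos
  have : (fun x : FSp => dmin P ⇑x) = fun x : FSp => ⨅ n, pdepth P ⇑x (u n) := funext heq
  rw [this]
  exact Measurable.iInf fun n => (pdepth_cont_x P hFcont (u n)).measurable

end Aux3
section Aux4

variable (P : Measure FSp) [IsProbabilityMeasure P]

lemma margF_tendsto_atTop (t : unitInterval) : Tendsto (margF P t) atTop (𝓝 1) := by
  have hub : ∀ y, margF P t y ≤ 1 := margF_le_one P t
  have hbdd : BddAbove (range (margF P t)) := ⟨1, by rintro y ⟨z, rfl⟩; exact hub z⟩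
  have h2 := tendsto_atTop_ciSup (margF_mono P t) hbdd
  have h1 : Tendsto (fun n : ℕ => margF P t n) atTop (𝓝 1) := by
    set s : ℕ → Set FSp := fun n => {x : FSp | x t ≤ (n:ℝ)} with hs
    have hmono : Monotone s := by
      intro m n hmn x hx
      simp only [hs, mem_setOf_eq] at hx ⊢
      exact le_trans hx (Nat.cast_le.mpr hmn)
    have hU : (⋃ n, s n) = univ := by
      apply eq_univ_of_forall
      intro x
      obtain ⟨n, hn⟩ := exists_nat_ge (x t)
      exact mem_iUnion.mpr ⟨n, hn⟩
    have htend : Tendsto (fun n => P (s n)) atTop (𝓝 1) := by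
      have := tendsto_measure_iUnion_atTop (μ := P) hmono
      rwa [hU, measure_univ] at this
    have := (ENNReal.tendsto_toReal ENNReal.one_ne_top).comp htend
    rw [ENNReal.toReal_one] at this
    exact this
  have hsup : ⨆ y, margF P t y = 1 := by
    apply le_antisymm (ciSup_le hub)
    apply le_of_tendsto h1
    filter_upwards with n
    exact le_ciSup hbdd ((n:ℝ))
  rwa [hsup] at h2

lemma margF_tendsto_atBot (t : unitInterval) : Tendsto (margF P t) atBot (𝓝 0) := by
  have hlb : ∀ y, 0 ≤ margF P t y := margF_nonneg P t
  have hbdd : BddBelow (range (margF P t)) := ⟨0, by rintro y ⟨z, rfl⟩; exact hlb z⟩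
  have h2 := tendsto_atBot_ciInf (margF_mono P t) hbdd
  have h1 : Tendsto (fun n : ℕ => margF P t (-(n:ℝ))) atTop (𝓝 0) := by
    set s : ℕ → Set FSp := fun n => {x : FSp | x t ≤ -(n:ℝ)} with hs
    have hanti : Antitone s := by
      intro m n hmn x hx
      simp only [hs, mem_setOf_eq] at hx ⊢
      have : (m:ℝ) ≤ n := Nat.cast_le.mpr hmn
      linarith
    have hI : (⋂ n, s n) = ∅ := by
      apply eq_empty_iff_forall_notMem.mpr
      intro x hx
      obtain ⟨n, hn⟩ := exists_nat_gt (-(x t))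
      have := mem_iInter.mp hx n
      simp only [hs, mem_setOf_eq] at this
      linarith
    have htend : Tendsto (fun n => P (s n)) atTop (𝓝 0) := by
      have := tendsto_measure_iInter_atTop (μ := P)
        (fun n => (measSet_le t _).nullMeasurableSet) hanti ⟨0, measure_ne_top P _⟩
      rwa [hI, measure_empty] at this
    have := (ENNReal.tendsto_toReal ENNReal.zero_ne_top).comp htend
    rw [ENNReal.toReal_zero] at this
    exact this
  have hinf : ⨅ y, margF P t y = 0 := by
    apply le_antisymm _ (le_ciInf hlb)
    apply ge_of_tendsto h1
    filter_upwards with n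
    exact ciInf_le hbdd (-(n:ℝ))
  rwa [hinf] at h2

lemma margF_quant (hFcont : ∀ t : unitInterval, Continuous (margF P t))
    {a : ℝ} (ha : a ∈ Ioo (0:ℝ) 1) (t : unitInterval) :
    margF P t (quant P a t) = a := by
  set S := {y : ℝ | a ≤ margF P t y} with hS
  have hne : S.Nonempty :=
    ((margF_tendsto_atTop P t).eventually (eventually_ge_nhds ha.2)).exists
  have hbdd : BddBelow S := by
    obtain ⟨y₀, hy₀⟩ := eventually_atBot.mp
      ((margF_tendsto_atBot P t).eventually (eventually_lt_nhds ha.1))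
    refine ⟨y₀, fun y hy => ?_⟩
    by_contra hlt
    push_neg at hlt
    exact absurd hy (not_le.mpr (hy₀ y hlt.le))
  have hq : quant P a t = sInf S := rfl
  have h1 : a ≤ margF P t (quant P a t) := by
    have hstep : ∀ n : ℕ, a ≤ margF P t (sInf S + 1/(n+1)) := by
      intro n
      obtain ⟨s, hsS, hslt⟩ := exists_lt_of_csInf_lt hne
        (lt_add_of_pos_right (sInf S) (by positivity : (0:ℝ) < 1/(n+1)))
      exact le_trans hsS (margF_mono P t hslt.le)
    have hc : Tendsto (fun n : ℕ => margF P t (sInf S + 1/(n+1))) atTop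
        (𝓝 (margF P t (sInf S))) := by
      apply ((hFcont t).tendsto (sInf S)).comp
      have h1' : Tendsto (fun n : ℕ => 1/((n:ℝ)+1)) atTop (𝓝 0) :=
        tendsto_one_div_add_atTop_nhds_zero_nat
      have := tendsto_const_nhds (x := sInf S) (f := atTop (α := ℕ)) |>.add h1'
      simpa using this
    rw [hq]
    exact ge_of_tendsto hc (Eventually.of_forall hstep)
  have h2 : margF P t (quant P a t) ≤ a := by
    have hstep : ∀ n : ℕ, margF P t (sInf S - 1/(n+1)) ≤ a := by
      intro n
      have hpos : (0:ℝ) < 1/(n+1) := by positivity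
      have hnot : sInf S - 1/(n+1) ∉ S :=
        notMem_of_lt_csInf (by linarith) hbdd
      simp only [hS, mem_setOf_eq, not_le] at hnot
      exact hnot.le
    have hc : Tendsto (fun n : ℕ => margF P t (sInf S - 1/(n+1))) atTop
        (𝓝 (margF P t (sInf S))) := by
      apply ((hFcont t).tendsto (sInf S)).comp
      have h1' : Tendsto (fun n : ℕ => 1/((n:ℝ)+1)) atTop (𝓝 0) :=
        tendsto_one_div_add_atTop_nhds_zero_nat
      have := tendsto_const_nhds (x := sInf S) (f := atTop (α := ℕ)) |>.sub h1'
      simpa using this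
    rw [hq]
    exact le_of_tendsto hc (Eventually.of_forall hstep)
  exact le_antisymm h2 h1

lemma singleton_null (hFcont : ∀ t : unitInterval, Continuous (margF P t)) (h : FSp) :
    P {h} = 0 := by
  refine measure_mono_null (fun x hx => ?_) (atom_zero P 0 (hFcont 0) (h 0))
  rw [mem_singleton_iff] at hx
  rw [hx]
  exact rfl

lemma level_null (hFcont : ∀ t : unitInterval, Continuous (margF P t))
    (hcond : ∀ h : FSp, P {x : FSp | dmin P ⇑x = dmin P ⇑h ∧ x ≠ h} = 0) (c : ℝ) :
    P {x : FSp | dmin P ⇑x = c} = 0 := by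
  by_cases hx : ∃ h : FSp, dmin P ⇑h = c
  · obtain ⟨h, hh⟩ := hx
    have hsub : {x : FSp | dmin P ⇑x = c} ⊆
        {h} ∪ {x : FSp | dmin P ⇑x = dmin P ⇑h ∧ x ≠ h} := by
      intro x hxc
      by_cases hxh : x = h
      · exact Or.inl (mem_singleton_iff.mpr hxh)
      · exact Or.inr ⟨hxc.trans hh.symm, hxh⟩
    apply measure_mono_null hsub
    apply measure_union_null (singleton_null P hFcont h) (hcond h)
  · have hempty : {x : FSp | dmin P ⇑x = c} = ∅ :=
      eq_empty_iff_forall_notMem.mpr fun x hxc => hx ⟨x, hxc⟩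
    rw [hempty, measure_empty]

lemma ed_eq (hFcont : ∀ t : unitInterval, Continuous (margF P t))
    (hcond : ∀ h : FSp, P {x : FSp | dmin P ⇑x = dmin P ⇑h ∧ x ≠ h} = 0)
    (g : unitInterval → ℝ) :
    ed P g = (P {x : FSp | dmin P ⇑x < dmin P g}).toReal ∧
    P {x : FSp | ¬ prec P g ⇑x} = P {x : FSp | dmin P ⇑x < dmin P g} := by
  have hsub1 : {x : FSp | dmin P ⇑x < dmin P g} ⊆ {x : FSp | ¬ prec P g ⇑x} :=
    fun x hx hp => prec_asymm P hp (prec_of_dmin_lt P hx)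
  have hsub2 : {x : FSp | ¬ prec P g ⇑x} ⊆
      {x : FSp | dmin P ⇑x < dmin P g} ∪ {x : FSp | dmin P ⇑x = dmin P g} := by
    intro x hx
    rcases lt_trichotomy (dmin P ⇑x) (dmin P g) with h | h | h
    · exact Or.inl h
    · exact Or.inr h
    · exact absurd (prec_of_dmin_lt P h) hx
  have hkey : P {x : FSp | ¬ prec P g ⇑x} = P {x : FSp | dmin P ⇑x < dmin P g} := by
    apply le_antisymm
    · refine le_trans (measure_mono hsub2) ?_
      refine le_trans (measure_union_le _ _) ?_
      rw [level_null P hFcont hcond (dmin P g), add_zero]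
    · exact measure_mono hsub1
  exact ⟨by rw [ed, hkey], hkey⟩

lemma pdepth_quant (hFcont : ∀ t : unitInterval, Continuous (margF P t))
    {γ : ℝ} (hγ : γ ∈ Ioo (0:ℝ) 1) (t : unitInterval) :
    pdepth P (quant P (γ/2)) t = γ := by
  obtain ⟨h0, h1⟩ := hγ
  rw [pdepth_eq P t (hFcont t), margF_quant P hFcont ⟨by linarith, by linarith⟩ t]
  rw [abs_of_nonneg (by linarith)]
  ring

lemma dmin_quant (hFcont : ∀ t : unitInterval, Continuous (margF P t))
    {γ : ℝ} (hγ : γ ∈ Ioo (0:ℝ) 1) (hq1 : Continuous fun t => quant P (γ/2) t) :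
    dmin P (quant P (γ/2)) = γ := by
  rw [dmin_eq_iInf P hFcont hq1]
  have : (fun t => pdepth P (quant P (γ/2)) t) = fun _ => γ :=
    funext fun t => pdepth_quant P hFcont hγ t
  rw [this, ciInf_const]

end Aux4

/-- **Proposition 5 (correspondence between pointwise and extremal-depth
central regions).** -/


theorem pointwise_region_is_ED_region (P : Measure FSp) [IsProbabilityMeasure P]
    (γ : ℝ) (hγ : γ ∈ Ioo (0:ℝ) 1)
    (hFcont : ∀ t : unitInterval, Continuous (margF P t))
    (hq1 : Continuous fun t => quant P (γ/2) t)
    (hq2 : Continuous fun t => quant P (1 - γ/2) t)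
    (hcond : ∀ h : FSp, P {x : FSp | dmin P ⇑x = dmin P ⇑h ∧ x ≠ h} = 0) :
    P (symmDiff
        {f : FSp | ∀ t, quant P (γ/2) t ≤ f t ∧ f t ≤ quant P (1 - γ/2) t}
        {f : FSp | ed P (quant P (γ/2)) ≤ ed P ⇑f}) = 0 := by
  obtain ⟨hγ0, hγ1⟩ := hγ
  set Q := {f : FSp | ∀ t, quant P (γ/2) t ≤ f t ∧ f t ≤ quant P (1 - γ/2) t} with hQ
  set C := {f : FSp | ed P (quant P (γ/2)) ≤ ed P ⇑f} with hC
  set D : FSp → ℝ := fun x => dmin P ⇑x with hD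
  have hDmeas : Measurable D := dmin_measurable P hFcont
  have hD01 : ∀ x : FSp, D x ∈ Icc (0:ℝ) 1 := fun x => dmin_mem_Icc P ⇑x
  have hdq : dmin P (quant P (γ/2)) = γ := dmin_quant P hFcont ⟨hγ0, hγ1⟩ hq1
  have hedg : ∀ g : unitInterval → ℝ,
      ed P g = (P {x : FSp | D x < dmin P g}).toReal :=
    fun g => (ed_eq P hFcont hcond g).1
  have hFq1 : ∀ t, margF P t (quant P (γ/2) t) = γ/2 :=
    margF_quant P hFcont ⟨by linarith, by linarith⟩
  have hFq2 : ∀ t, margF P t (quant P (1 - γ/2) t) = 1 - γ/2 :=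
    margF_quant P hFcont ⟨by linarith, by linarith⟩
  have hdmininf : ∀ f : FSp, D f = ⨅ t, pdepth P ⇑f t :=
    fun f => dmin_eq_iInf P hFcont f.continuous
  have hpd : ∀ (f : FSp) (t : unitInterval),
      pdepth P ⇑f t = 1 - |1 - 2 * margF P t (f t)| :=
    fun f t => pdepth_eq P t (hFcont t) ⇑f
  have hQA : ∀ f ∈ Q, ∀ t, γ ≤ pdepth P ⇑f t := by
    intro f hf t
    obtain ⟨hL, hU⟩ := hf t
    have h1 : γ/2 ≤ margF P t (f t) := by rw [← hFq1 t]; exact margF_mono P t hL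
    have h2 : margF P t (f t) ≤ 1 - γ/2 := by rw [← hFq2 t]; exact margF_mono P t hU
    rw [hpd f t]
    have habs : |1 - 2 * margF P t (f t)| ≤ 1 - γ := abs_le.mpr ⟨by linarith, by linarith⟩
    linarith
  have hAd : ∀ f : FSp, (∀ t, γ ≤ pdepth P ⇑f t) → γ ≤ D f := by
    intro f hf
    rw [hdmininf f]
    exact le_ciInf hf
  have hmonoG : ∀ c c' : ℝ, c ≤ c' → P {x : FSp | D x < c} ≤ P {x : FSp | D x < c'} :=
    fun c c' h => measure_mono fun x hx => lt_of_lt_of_le hx h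
  have hdC : ∀ f : FSp, γ ≤ D f → f ∈ C := by
    intro f hf
    have h1 : dmin P ⇑f = D f := rfl
    rw [hC, mem_setOf_eq, hedg, hedg, hdq, h1]
    exact ENNReal.toReal_mono (measure_ne_top P _) (hmonoG γ (D f) hf)
  have hQC : Q ⊆ C := fun f hf => hdC f (hAd f (hQA f hf))
  set N₁ := {x : FSp | D x < γ ∧ P {y : FSp | D y < D x} = P {y : FSp | D y < γ}} with hN₁
  have hsplit : C \ Q ⊆ {x : FSp | D x = γ} ∪ N₁ := by
    rintro f ⟨hfC, hfQ⟩
    by_cases hA : ∀ t, γ ≤ pdepth P ⇑f t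
    · left
      simp only [hQ, mem_setOf_eq] at hfQ
      push_neg at hfQ
      obtain ⟨t₀, ht₀⟩ := hfQ
      have hge := hA t₀
      rw [hpd f t₀] at hge
      have habs : |1 - 2 * margF P t₀ (f t₀)| ≤ 1 - γ := by linarith
      obtain ⟨ha1, ha2⟩ := abs_le.mp habs
      have hpt : pdepth P ⇑f t₀ = γ := by
        rw [hpd f t₀]
        by_cases hv : quant P (γ/2) t₀ ≤ f t₀
        · have hv2 : quant P (1 - γ/2) t₀ < f t₀ := ht₀ hv
          have hFv : 1 - γ/2 ≤ margF P t₀ (f t₀) := by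
            rw [← hFq2 t₀]; exact margF_mono P t₀ hv2.le
          have heqF : margF P t₀ (f t₀) = 1 - γ/2 := le_antisymm (by linarith) hFv
          rw [heqF, abs_of_nonpos (by linarith)]
          ring
        · have hv2 : f t₀ < quant P (γ/2) t₀ := not_le.mp hv
          have hFv : margF P t₀ (f t₀) ≤ γ/2 := by
            rw [← hFq1 t₀]; exact margF_mono P t₀ hv2.le
          have heqF : margF P t₀ (f t₀) = γ/2 := le_antisymm hFv (by linarith)
          rw [heqF, abs_of_nonneg (by linarith)]
          ring
      have h1 : D f ≤ γ := by
        rw [hdmininf f]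
        exact le_trans (ciInf_le (pdepth_bddBelow P ⇑f) t₀) hpt.le
      exact le_antisymm h1 (hAd f hA)
    · right
      push_neg at hA
      obtain ⟨t₁, ht₁⟩ := hA
      have h1 : D f < γ := by
        refine lt_of_le_of_lt ?_ ht₁
        rw [hdmininf f]
        exact ciInf_le (pdepth_bddBelow P ⇑f) t₁
      refine ⟨h1, ?_⟩
      have h2 : (P {y : FSp | D y < γ}).toReal ≤ (P {y : FSp | D y < D f}).toReal := by
        have h3 := hfC
        have h4 : dmin P ⇑f = D f := rfl
        rw [hC, mem_setOf_eq, hedg, hedg, hdq, h4] at h3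
        exact h3
      have h3 := (ENNReal.toReal_le_toReal (measure_ne_top P _) (measure_ne_top P _)).mp h2
      exact le_antisymm (hmonoG _ _ h1.le) h3
  have hz2 : P {x : FSp | D x = γ} = 0 := level_null P hFcont hcond γ
  have hz1 : P N₁ = 0 := by
    by_cases hG : P {y : FSp | D y < γ} = 0
    · exact measure_mono_null (fun x hx => hx.1) hG
    · set T := {c : ℝ | c < γ ∧ P {y : FSp | D y < c} = P {y : FSp | D y < γ}} with hT
      by_cases hTne : T.Nonempty
      · have hbddT : BddBelow T := by
          refine ⟨0, fun c hc => ?_⟩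
          by_contra hneg
          push_neg at hneg
          have hempty : {y : FSp | D y < c} = ∅ :=
            eq_empty_iff_forall_notMem.mpr fun y hy =>
              absurd (hD01 y).1 (not_le.mpr (lt_trans hy hneg))
          obtain ⟨hc1, hc2⟩ := hc
          rw [hempty, measure_empty] at hc2
          exact hG hc2.symm
        set c₀ := sInf T with hc₀
        have hc₀γ : c₀ < γ := by
          obtain ⟨c, hc⟩ := hTne
          exact lt_of_le_of_lt (csInf_le hbddT hc) hc.1
        have hup : ∀ c, c₀ < c → c < γ → c ∈ T := by
          intro c hh1 hh2
          obtain ⟨c', hc', hlt⟩ := exists_lt_of_csInf_lt hTne hh1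
          refine ⟨hh2, le_antisymm (hmonoG c γ hh2.le) ?_⟩
          rw [← hc'.2]
          exact hmonoG c' c hlt.le
        have hcover : N₁ ⊆ {x : FSp | D x = c₀} ∪
            ⋃ n : ℕ, {x : FSp | c₀ + (γ - c₀)/(n+2) ≤ D x ∧ D x < γ} := by
          intro x hx
          have hxT : D x ∈ T := ⟨hx.1, hx.2⟩
          rcases eq_or_lt_of_le (csInf_le hbddT hxT) with he | hlt
          · exact Or.inl he.symm
          · right
            have hd : 0 < D x - c₀ := sub_pos.mpr hlt
            obtain ⟨n, hn⟩ := exists_nat_ge ((γ - c₀)/(D x - c₀))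
            refine mem_iUnion.mpr ⟨n, ?_, hx.1⟩
            have h2 : (γ - c₀)/(D x - c₀) ≤ (n:ℝ)+2 := by linarith
            rw [div_le_iff₀ hd] at h2
            have h3 : (γ - c₀)/((n:ℝ)+2) ≤ D x - c₀ := by
              rw [div_le_iff₀ (by positivity)]
              nlinarith
            linarith
        apply measure_mono_null hcover
        apply measure_union_null (level_null P hFcont hcond c₀)
        apply measure_iUnion_null
        intro n
        set c := c₀ + (γ - c₀)/((n:ℝ)+2) with hcdef
        have hpos : (0:ℝ) < (γ - c₀)/((n:ℝ)+2) :=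
          div_pos (by linarith) (by positivity)
        have hcgt : c₀ < c := by rw [hcdef]; linarith
        have hclt : c < γ := by
          have h1 : (γ - c₀)/((n:ℝ)+2) < γ - c₀ := by
            rw [div_lt_iff₀ (by positivity)]
            nlinarith
          rw [hcdef]; linarith
        have hcT : c ∈ T := hup c hcgt hclt
        have hdiffeq : {x : FSp | c ≤ D x ∧ D x < γ} =
            {x : FSp | D x < γ} \ {x : FSp | D x < c} := by
          ext x
          simp only [mem_setOf_eq, mem_diff, not_lt]
          exact and_comm
        have hmeasc : MeasurableSet {x : FSp | D x < c} := hDmeas measurableSet_Iio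
        have hsubc : {x : FSp | D x < c} ⊆ {x : FSp | D x < γ} :=
          fun x hx => lt_trans hx hclt
        have := measure_diff hsubc hmeasc.nullMeasurableSet (measure_ne_top P _)
        rw [hdiffeq, this, hcT.2, tsub_self]
      · have hempty : N₁ = ∅ :=
          eq_empty_iff_forall_notMem.mpr fun x hx => hTne ⟨D x, hx.1, hx.2⟩
        rw [hempty, measure_empty]
  rw [Set.symmDiff_def]
  apply measure_union_null
  · have h : Q \ C = ∅ := diff_eq_empty.mpr hQC
    rw [h, measure_empty]
  · exact measure_mono_null hsplit (measure_union_null hz2 hz1)
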